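/- Exchange argument for greedy selection: suppose {S_1,...,S_D} is a solution to P5, r ∈ F_1 \ S_1, and s ∈ S_m for some m ≥ 2 with S_m ≠ ∅. Then {S_1 ∪ {r}, S_2, ..., S_m \ {s}, ..., S_D} is also a solution to P5, with the resulting block-wise batch sizes n'_d satisfying n'_d ≤ n_d for all d. -/
import Mathlib


open Finset

/-- Exchange argument for greedy selection: if `S` solves P5, `r ∈ F₁ \ S₁` and
`s ∈ S_m` for some `m ≥ 2`, then `S' = (S \ {s}) ∪ {r}` also solves P5, and the
resulting block-wise batch sizes satisfy `n'_d ≤ n_d` for all `d`. -/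
theorem exchange_argument {ι : Type*} [DecidableEq ι] (K : Finset ι) (D : ℕ)
    (dk : ι → ℕ) (hdk : ∀ k ∈ K, 1 ≤ dk k ∧ dk k ≤ D) (τ : ι → ℝ) (f : ℕ → ℕ → ℝ)
    (hf0 : ∀ d m, 0 ≤ f d m) (hf : ∀ d, Monotone (f d)) (n : ℕ)
    (S : Finset ι) (hSK : S ⊆ K) (hScard : S.card = n)
    (hSfeas : ∀ k ∈ S, (∑ d ∈ Finset.Icc 1 (dk k),
        f d (S.filter (fun j => d ≤ dk j)).card) ≤ τ k)
    (r : ι) (hrK : r ∈ K) (hr1 : dk r = 1) (hrτ : f 1 n ≤ τ r) (hrS : r ∉ S)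
    (s : ι) (hsS : s ∈ S) (m : ℕ) (hm : 2 ≤ m) (hsm : dk s = m) :
    ((insert r (S.erase s)) ⊆ K ∧ (insert r (S.erase s)).card = n ∧
      (∀ k ∈ insert r (S.erase s), (∑ d ∈ Finset.Icc 1 (dk k),
          f d ((insert r (S.erase s)).filter (fun j => d ≤ dk j)).card) ≤ τ k)) ∧
      (∀ d : ℕ, ((insert r (S.erase s)).filter (fun j => d ≤ dk j)).card ≤
          (S.filter (fun j => d ≤ dk j)).card) := by
  have hrE : r ∉ S.erase s := fun h => hrS (Finset.mem_of_mem_erase h)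
  have hsub : insert r (S.erase s) ⊆ K := by
    intro k hk
    rcases Finset.mem_insert.mp hk with rfl | h
    · exact hrK
    · exact hSK (Finset.mem_of_mem_erase h)
  have hncard : 1 ≤ S.card := Finset.card_pos.mpr ⟨s, hsS⟩
  have hcard : (insert r (S.erase s)).card = n := by
    rw [Finset.card_insert_of_notMem hrE, Finset.card_erase_of_mem hsS]
    omega
  have hle : ∀ d : ℕ, ((insert r (S.erase s)).filter (fun j => d ≤ dk j)).card ≤
      (S.filter (fun j => d ≤ dk j)).card := by
    intro d
    rw [Finset.filter_insert, Finset.filter_erase]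
    by_cases hd : d ≤ dk r
    · rw [if_pos hd]
      have hsf : s ∈ S.filter (fun j => d ≤ dk j) :=
        Finset.mem_filter.mpr ⟨hsS, by omega⟩
      have h1 : ((S.filter (fun j => d ≤ dk j)).erase s).card =
          (S.filter (fun j => d ≤ dk j)).card - 1 := Finset.card_erase_of_mem hsf
      have h2 : 1 ≤ (S.filter (fun j => d ≤ dk j)).card := Finset.card_pos.mpr ⟨s, hsf⟩
      calc (insert r ((S.filter (fun j => d ≤ dk j)).erase s)).card
          ≤ ((S.filter (fun j => d ≤ dk j)).erase s).card + 1 :=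
            Finset.card_insert_le _ _
        _ ≤ (S.filter (fun j => d ≤ dk j)).card := by omega
    · rw [if_neg hd]
      exact Finset.card_le_card (Finset.erase_subset _ _)
  refine ⟨⟨hsub, hcard, ?_⟩, hle⟩
  intro k hk
  rcases Finset.mem_insert.mp hk with rfl | h
  · rw [hr1]
    have hfull : (insert k (S.erase s)).filter (fun j => 1 ≤ dk j) =
        insert k (S.erase s) := by
      apply Finset.filter_true_of_mem
      intro j hj
      exact (hdk j (hsub hj)).1
    simp only [Finset.Icc_self, Finset.sum_singleton, hfull, hcard]
    exact hrτ
  · calc (∑ d ∈ Finset.Icc 1 (dk k),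
          f d ((insert r (S.erase s)).filter (fun j => d ≤ dk j)).card)
        ≤ ∑ d ∈ Finset.Icc 1 (dk k), f d ((S.filter (fun j => d ≤ dk j)).card) :=
          Finset.sum_le_sum fun d _ => (hf d) (hle d)
      _ ≤ τ k := hSfeas k (Finset.mem_of_mem_erase h)
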